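/- Let G be a finite connected locally connected graph of diameter two, let x be a vertex and let u be a neighbor of x. Then the class [u]_x = {w ≠ x : line(x,w) = line(x,u)} is an independent set (no two of its vertices are adjacent) and is a module of G, i.e., every vertex z ∉ [u]_x is adjacent either to all vertices of [u]_x or to none of them. -/

import Mathlib

open SimpleGraph

/-- The line defined by two vertices `a` and `b` of a graph: `{a, b}` together with all
vertices `c` lying on a shortest path through `a`, `b` and `c` (in some order). -/
def SimpleGraph.line {V : Type*} (G : SimpleGraph V) (a b : V) : Set V :=
  {a, b} ∪ {c | G.dist a b = G.dist a c + G.dist c b ∨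
                G.dist a c = G.dist a b + G.dist b c ∨
                G.dist b c = G.dist b a + G.dist a c}

/-- The set of all lines of a graph. -/
def SimpleGraph.lineSet {V : Type*} (G : SimpleGraph V) : Set (Set V) :=
  {s | ∃ a b : V, a ≠ b ∧ s = G.line a b}

/-- A graph is locally connected if the subgraph induced on each neighborhood is connected. -/
def SimpleGraph.LocallyConnected {V : Type*} (G : SimpleGraph V) : Prop :=
  ∀ v : V, (G.induce (G.neighborSet v)).Connected

/-- The class `[u]_z`: all vertices `w ≠ z` defining the same line with `z` as `u` does. -/
def SimpleGraph.lineClass {V : Type*} (G : SimpleGraph V) (z u : V) : Set V :=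
  {w | w ≠ z ∧ G.line z w = G.line z u}

section Aux

variable {V : Type*} (G : SimpleGraph V)

lemma aux_dist_of_adj {a b : V} (h : G.Adj a b) : G.dist a b = 1 :=
  dist_eq_one_iff_adj.mpr h

lemma aux_dist_of_nadj (hG : G.Connected) (hle : ∀ a b : V, G.dist a b ≤ 2)
    {a b : V} (hne : a ≠ b) (h : ¬ G.Adj a b) : G.dist a b = 2 := by
  have h0 : 0 < G.dist a b := hG.pos_dist_of_ne hne
  have h1 : G.dist a b ≠ 1 := fun h' => h (dist_eq_one_iff_adj.mp h')
  have := hle a b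
  omega

lemma aux_mem_line_iff {a b c : V} : c ∈ G.line a b ↔
    (c = a ∨ c = b ∨ (G.dist a b = G.dist a c + G.dist c b ∨
      G.dist a c = G.dist a b + G.dist b c ∨
      G.dist b c = G.dist b a + G.dist a c)) := by
  simp [SimpleGraph.line, Set.mem_union, Set.mem_insert_iff, or_assoc]

/-- Characterization of the line of an adjacent pair in a connected graph
with all distances at most two. -/
lemma aux_mem_line_adj (hG : G.Connected) (hle : ∀ a b : V, G.dist a b ≤ 2)
    {x u : V} (hu : G.Adj x u) (c : V) :
    c ∈ G.line x u ↔ (G.Adj x c ↔ ¬ G.Adj u c) := by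
  have hxu1 : G.dist x u = 1 := aux_dist_of_adj G hu
  have hux1 : G.dist u x = 1 := aux_dist_of_adj G hu.symm
  rw [aux_mem_line_iff]
  by_cases hcx : c = x
  · subst hcx
    simp [hu.symm, G.ne_of_adj hu, G.loopless.irrefl c]
  by_cases hcu : c = u
  · subst hcu
    simp [hu, G.loopless.irrefl c]
  have hcx' : x ≠ c := fun h => hcx h.symm
  have hcu' : u ≠ c := fun h => hcu h.symm
  by_cases hxc : G.Adj x c <;> by_cases huc : G.Adj u c
  · have d1 : G.dist x c = 1 := aux_dist_of_adj G hxc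
    have d2 : G.dist u c = 1 := aux_dist_of_adj G huc
    have d3 : G.dist c u = 1 := aux_dist_of_adj G huc.symm
    simp only [hcx, hcu, false_or]
    constructor
    · intro h; omega
    · intro h; exact absurd huc (h.mp hxc)
  · have d1 : G.dist x c = 1 := aux_dist_of_adj G hxc
    have d2 : G.dist u c = 2 := aux_dist_of_nadj G hG hle hcu' huc
    have d3 : G.dist c u = 2 := by rwa [SimpleGraph.dist_comm] at d2
    simp only [hcx, hcu, false_or]
    constructor
    · intro _; simp [hxc, huc]
    · intro _; omega
  · have d1 : G.dist x c = 2 := aux_dist_of_nadj G hG hle hcx' hxc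
    have d2 : G.dist u c = 1 := aux_dist_of_adj G huc
    have d3 : G.dist c u = 1 := aux_dist_of_adj G huc.symm
    simp only [hcx, hcu, false_or]
    constructor
    · intro _; simp [hxc, huc]
    · intro _; omega
  · have d1 : G.dist x c = 2 := aux_dist_of_nadj G hG hle hcx' hxc
    have d2 : G.dist u c = 2 := aux_dist_of_nadj G hG hle hcu' huc
    have d3 : G.dist c u = 2 := by rwa [SimpleGraph.dist_comm] at d2
    simp only [hcx, hcu, false_or]
    constructor
    · intro h; omega
    · intro h; exact absurd (h.mpr huc) hxc

/-- For a non-adjacent pair at distance two, members of the line other than the endpoints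
are exactly the common neighbors. -/
lemma aux_mem_line_nadj (hG : G.Connected) (hle : ∀ a b : V, G.dist a b ≤ 2)
    {x w : V} (hxw : x ≠ w) (hnadj : ¬ G.Adj x w) (c : V) :
    c ∈ G.line x w ↔ (c = x ∨ c = w ∨ (G.Adj x c ∧ G.Adj w c)) := by
  have hxw2 : G.dist x w = 2 := aux_dist_of_nadj G hG hle hxw hnadj
  have hwx2 : G.dist w x = 2 := by rwa [SimpleGraph.dist_comm] at hxw2
  rw [aux_mem_line_iff]
  by_cases hcx : c = x
  · simp [hcx]
  by_cases hcw : c = w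
  · simp [hcw]
  have hcx' : x ≠ c := fun h => hcx h.symm
  have hcw' : w ≠ c := fun h => hcw h.symm
  simp only [hcx, hcw, false_or]
  have h0x : 0 < G.dist x c := hG.pos_dist_of_ne hcx'
  have h0w : 0 < G.dist w c := hG.pos_dist_of_ne hcw'
  have h0w' : 0 < G.dist c w := by rwa [SimpleGraph.dist_comm] at h0w
  constructor
  · intro h
    have hx1 : G.dist x c = 1 := by
      rcases h with h | h | h
      · have := hle x c; have := hle c w; omega
      · have := hle x c; have := hle w c; omega
      · have := hle w c; omega
    have hw1 : G.dist w c = 1 := by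
      have hcwd : G.dist c w = G.dist w c := SimpleGraph.dist_comm ..
      rcases h with h | h | h
      · omega
      · have := hle w c; omega
      · have := hle w c; omega
    exact ⟨dist_eq_one_iff_adj.mp hx1, dist_eq_one_iff_adj.mp hw1⟩
  · rintro ⟨h1, h2⟩
    left
    have d1 : G.dist x c = 1 := aux_dist_of_adj G h1
    have d2 : G.dist c w = 1 := aux_dist_of_adj G h2.symm
    omega

/-- Every member of the line class of a neighbor of `x` is itself a neighbor of `x`. -/
lemma aux_adj_of_lineClass (hG : G.Connected) (hlc : G.LocallyConnected)
    (hle : ∀ a b : V, G.dist a b ≤ 2)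
    {x u w : V} (hu : G.Adj x u) (hw : w ∈ G.lineClass x u) : G.Adj x w := by
  obtain ⟨hwx, hline⟩ := hw
  by_contra hnadj
  -- w ∈ line x u, hence u is adjacent to w
  have hwmem : w ∈ G.line x w := by rw [aux_mem_line_iff]; right; left; rfl
  have hwu : G.Adj u w := by
    have := (aux_mem_line_adj G hG hle hu w).mp (hline ▸ hwmem)
    by_contra h
    exact hnadj (this.mpr h)
  have hwx' : w ≠ x := hwx
  -- find a neighbor of w inside N(u)
  have hxN : x ∈ G.neighborSet u := hu.symm
  have hwN : w ∈ G.neighborSet u := hwu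
  obtain ⟨p⟩ := (hlc u).preconnected ⟨w, hwN⟩ ⟨x, hxN⟩
  have hnenil : ¬ p.Nil := SimpleGraph.Walk.not_nil_of_ne (by simp [hwx'])
  obtain ⟨c', hadj, q, -⟩ := SimpleGraph.Walk.not_nil_iff.mp hnenil
  have hc1 : G.Adj w (c' : V) := hadj
  have hc2 : G.Adj u (c' : V) := c'.2
  set c : V := (c' : V) with hc
  have hcw : w ≠ c := G.ne_of_adj hc1
  by_cases hxc : G.Adj x c
  · -- c is a common neighbor of x and w, so c ∈ line x w = line x u, contradicting Adj u c
    have hmem : c ∈ G.line x w :=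
      (aux_mem_line_nadj G hG hle hwx'.symm hnadj c).mpr (Or.inr (Or.inr ⟨hxc, hc1⟩))
    have := (aux_mem_line_adj G hG hle hu c).mp (hline ▸ hmem)
    exact (this.mp hxc) hc2
  · -- c ∈ line x u since it is adjacent to u but not x, so c is a common neighbor of x, w
    have hmem : c ∈ G.line x u :=
      (aux_mem_line_adj G hG hle hu c).mpr (iff_of_false hxc (not_not_intro hc2))
    have := (aux_mem_line_nadj G hG hle hwx'.symm hnadj c).mp (hline ▸ hmem)
    rcases this with h | h | h
    · exact hnadj (h ▸ hc1).symm
    · exact hcw h.symm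
    · exact hxc h.1

/-- Members of the line class of `u` have the same neighbors as `u`. -/
lemma aux_nbr_eq (hG : G.Connected) (hlc : G.LocallyConnected)
    (hle : ∀ a b : V, G.dist a b ≤ 2)
    {x u w : V} (hu : G.Adj x u) (hw : w ∈ G.lineClass x u) (c : V) :
    G.Adj w c ↔ G.Adj u c := by
  have hxw : G.Adj x w := aux_adj_of_lineClass G hG hlc hle hu hw
  obtain ⟨hwx, hline⟩ := hw
  have h1 := aux_mem_line_adj G hG hle hxw c
  have h2 := aux_mem_line_adj G hG hle hu c
  rw [hline, h2] at h1
  tauto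

end Aux

theorem lineClass_independent_module {V : Type*} [Fintype V] (G : SimpleGraph V)
    (hG : G.Connected) (hlc : G.LocallyConnected) (hdiam : G.diam = 2)
    {x u : V} (hu : G.Adj x u) :
    (∀ a ∈ G.lineClass x u, ∀ b ∈ G.lineClass x u, ¬ G.Adj a b) ∧
    (∀ z ∉ G.lineClass x u,
      (∀ w ∈ G.lineClass x u, G.Adj z w) ∨ (∀ w ∈ G.lineClass x u, ¬ G.Adj z w)) := by
  have hne_top : G.ediam ≠ ⊤ := ediam_ne_top_of_diam_ne_zero (by omega)
  have hle : ∀ a b : V, G.dist a b ≤ 2 := fun a b => hdiam ▸ dist_le_diam hne_top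
  constructor
  · intro a ha b hb hab
    have h1 : G.Adj u b := (aux_nbr_eq G hG hlc hle hu ha b).mp hab
    have h2 : G.Adj b u ↔ G.Adj u u := aux_nbr_eq G hG hlc hle hu hb u
    exact G.loopless.irrefl u (h2.mp h1.symm)
  · intro z _
    by_cases h : ∃ w ∈ G.lineClass x u, G.Adj z w
    · left
      obtain ⟨w₀, hw₀, hzw₀⟩ := h
      have huz : G.Adj u z := (aux_nbr_eq G hG hlc hle hu hw₀ z).mp hzw₀.symm
      intro w hw
      exact ((aux_nbr_eq G hG hlc hle hu hw z).mpr huz).symm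
    · right
      push_neg at h
      exact h
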